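/- Define F : words over {x,y} → ℤ[t] recursively via auxiliary polynomials K and L: K(empty) = L(empty) = 0, K(y·v) = K(v), L(x·v) = L(v), K(x·v) = L(y·v) = (t+1)·(K(v) + L(v) + t + 1), and F(v) = K(v) + L(v) + t + 2. Then for every word v of length m, F(v) = 1 + Σ_{T ⊆ [m]} ((t+1)/t)^{κ(v^T)} · t^{|T|+1}, where v^T is the subword of v indexed by T, κ(w) = 2 + #{i : w_i ≠ w_{i+1}} for nonempty w and κ(empty) = 1. (Here each summand ((t+1)/t)^{κ(v^T)}·t^{|T|+1} is a polynomial in t since κ(v^T) ≤ |T|+1.) -/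

import Mathlib

/-- `κ(w) = 2 + #{i : w_i ≠ w_{i+1}}` for nonempty `w`, and `κ(empty) = 1`. -/
def kappa (w : List Bool) : ℕ :=
  if w = [] then 1 else 2 + (w.zip w.tail).countP (fun p => p.1 != p.2)

/-- The subword of `v` at the (1-indexed) positions in `T`. -/
def subword (v : List Bool) (T : Finset ℕ) : List Bool :=
  ((v.zipIdx.map Prod.swap).filter (fun p => decide (p.1 + 1 ∈ T))).map Prod.snd

/-- The `f`-polynomial `F_v(t) = 1 + ∑_{T ⊆ [|v|]} ((t+1)/t)^{κ(v^T)} t^{|T|+1}`,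
written with the power of `t` as `t^{|T|+1-κ(v^T)}` (valid since `κ(v^T) ≤ |T|+1`). -/
noncomputable def fPoly (v : List Bool) : Polynomial ℤ :=
  1 + ∑ T ∈ (Finset.Icc 1 v.length).powerset,
      (Polynomial.X + 1) ^ kappa (subword v T) *
        Polynomial.X ^ (T.card + 1 - kappa (subword v T))

/-- The pair `(K_v, L_v)` defined recursively (with `x = false`, `y = true`):
`K(1) = L(1) = 0`, `K(y·v) = K(v)`, `L(x·v) = L(v)`,
`K(x·v) = L(y·v) = (t+1)(K(v)+L(v)+t+1)`. -/
noncomputable def KL : List Bool → Polynomial ℤ × Polynomial ℤ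
  | [] => (0, 0)
  | false :: v =>
      ((Polynomial.X + 1) * ((KL v).1 + (KL v).2 + Polynomial.X + 1), (KL v).2)
  | true :: v =>
      ((KL v).1, (Polynomial.X + 1) * ((KL v).1 + (KL v).2 + Polynomial.X + 1))

open Polynomial Finset

/-- The summand. -/
noncomputable def tm (v : List Bool) (T : Finset ℕ) : Polynomial ℤ :=
  (X + 1) ^ kappa (subword v T) * X ^ (T.card + 1 - kappa (subword v T))

/-- Head-restricted sums. -/
noncomputable def Ssum (b : Bool) (v : List Bool) : Polynomial ℤ :=
  ∑ T ∈ (Finset.Icc 1 v.length).powerset,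
    if (subword v T).head? = some b then tm v T else 0

lemma kappa_cons (a : Bool) (w : List Bool) :
    kappa (a :: w) = if w.head? = some a then kappa w else kappa w + 1 := by
  cases w with
  | nil => simp [kappa]
  | cons b w' =>
    simp only [kappa, List.head?_cons, List.tail_cons, List.zip_cons_cons, List.countP_cons,
      List.cons_ne_nil, if_false, Option.some_inj]
    by_cases h : b = a
    · simp [h]
    · simp [h, Ne.symm h, bne_iff_ne]
      omega

lemma kappa_le (w : List Bool) : kappa w ≤ w.length + 1 := by
  induction w with
  | nil => simp [kappa]
  | cons a w ih =>
    rw [kappa_cons]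
    split <;> simp only [List.length_cons] <;> omega

lemma enum_cons' (a : Bool) (v : List Bool) :
    (a :: v).zipIdx.map Prod.swap = (0, a) :: (v.zipIdx.map Prod.swap).map (Prod.map (· + 1) id) := by
  rw [List.zipIdx_cons', List.map_cons, List.map_map, List.map_map]; rfl

lemma mem_image_succ (T : Finset ℕ) (n : ℕ) : (n + 1 ∈ T.image (· + 1)) ↔ n ∈ T := by
  simp only [Finset.mem_image]
  constructor
  · rintro ⟨t, ht, h⟩; simpa [Nat.succ_injective h.symm] using ht
  · exact fun h => ⟨n, h, rfl⟩

lemma subword_shift (a : Bool) (v : List Bool) (T : Finset ℕ) (h0 : 0 ∉ T) :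
    subword (a :: v) (T.image (· + 1)) = subword v T := by
  unfold subword
  rw [enum_cons', List.filter_cons, List.filter_map]
  have h1 : (decide ((0:ℕ) + 1 ∈ T.image (· + 1))) = false := by
    simp only [decide_eq_false_iff_not, zero_add]
    rw [show (1:ℕ) = 0 + 1 from rfl, mem_image_succ]; exact h0
  rw [h1]
  simp only [Bool.false_eq_true, if_false, List.map_map]
  rw [List.filter_congr (fun p _ => ?_)]
  · congr 1
  · show decide ((Prod.map (· + 1) id p).1 + 1 ∈ T.image (· + 1)) = decide (p.1 + 1 ∈ T)
    simp only [Prod.map_fst, id_eq]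
    rw [decide_eq_decide]
    exact mem_image_succ T (p.1 + 1)

lemma subword_insert (a : Bool) (v : List Bool) (T : Finset ℕ) (h0 : 0 ∉ T) :
    subword (a :: v) (insert 1 (T.image (· + 1))) = a :: subword v T := by
  unfold subword
  rw [enum_cons', List.filter_cons, List.filter_map]
  have h1 : (decide ((0:ℕ) + 1 ∈ insert 1 (T.image (· + 1)))) = true := by simp
  rw [h1]
  simp only [if_true, List.map_cons, List.map_map]
  congr 1
  rw [List.filter_congr (fun p _ => ?_)]
  · congr 1
  · show decide ((Prod.map (· + 1) id p).1 + 1 ∈ insert 1 (T.image (· + 1)))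
      = decide (p.1 + 1 ∈ T)
    simp only [Prod.map_fst, id_eq]
    rw [decide_eq_decide, Finset.mem_insert, mem_image_succ]
    simp

lemma countP_range (m : ℕ) (T : Finset ℕ) :
    List.countP (fun i => decide (i + 1 ∈ T)) (List.range m)
      = ((Finset.range m).filter (fun i => i + 1 ∈ T)).card := by
  rw [List.countP_eq_length_filter]
  rfl

lemma subword_length (v : List Bool) (T : Finset ℕ) (hT : T ⊆ Finset.Icc 1 v.length) :
    (subword v T).length = T.card := by
  unfold subword
  rw [List.length_map, ← List.countP_eq_length_filter]
  have h1 : List.countP (fun p => decide (p.1 + 1 ∈ T)) (v.zipIdx.map Prod.swap)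
      = List.countP (fun i => decide (i + 1 ∈ T)) ((v.zipIdx.map Prod.swap).map Prod.fst) := by
    simp only [List.countP_map]; rfl
  have h2 : (v.zipIdx.map Prod.swap).map Prod.fst = List.range v.length := by
    rw [List.map_map, List.range_eq_range']; exact List.zipIdx_map_snd 0 v
  rw [h1, h2, countP_range]
  apply Finset.card_bij (fun i _ => i + 1)
  · intro i hi
    simp only [Finset.mem_filter] at hi
    exact hi.2
  · intro i hi j hj h; omega
  · intro t ht
    have := hT ht
    simp only [Finset.mem_Icc] at this
    refine ⟨t - 1, ?_, by omega⟩
    simp only [Finset.mem_filter, Finset.mem_range]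
    rw [Nat.sub_add_cancel this.1]
    exact ⟨by omega, ht⟩

lemma subword_empty (v : List Bool) : subword v ∅ = [] := by
  simp [subword]

lemma tm_empty (v : List Bool) : tm v ∅ = X + 1 := by
  simp [tm, subword_empty, kappa]

lemma zero_not_mem (T : Finset ℕ) (m : ℕ) (hT : T ⊆ Finset.Icc 1 m) : 0 ∉ T := by
  intro h
  simpa using hT h

lemma card_image_succ (T : Finset ℕ) : (T.image (· + 1)).card = T.card :=
  Finset.card_image_of_injective _ (fun a b h => by omega)

lemma one_not_mem_image (T : Finset ℕ) (h0 : 0 ∉ T) : 1 ∉ T.image (· + 1) := by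
  rw [show (1:ℕ) = 0 + 1 from rfl, mem_image_succ]
  exact h0

/-- shifted term equality -/
lemma tm_shift (a : Bool) (v : List Bool) (T : Finset ℕ) (h0 : 0 ∉ T) :
    tm (a :: v) (T.image (· + 1)) = tm v T := by
  rw [tm, tm, subword_shift a v T h0, card_image_succ]

/-- The key pointwise computation. -/
lemma tm_insert (a : Bool) (v : List Bool) (T : Finset ℕ)
    (hT : T ⊆ Finset.Icc 1 v.length) :
    tm (a :: v) (insert 1 (T.image (· + 1)))
      = (if (subword v T).head? = some a then X else X + 1) * tm v T := by
  have h0 : 0 ∉ T := zero_not_mem T v.length hT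
  have hcard : (insert 1 (T.image (· + 1))).card = T.card + 1 := by
    rw [Finset.card_insert_of_notMem (one_not_mem_image T h0), card_image_succ]
  have hk : kappa (subword v T) ≤ T.card + 1 := by
    have := kappa_le (subword v T)
    rwa [subword_length v T hT] at this
  rw [tm, tm, subword_insert a v T h0, hcard, kappa_cons]
  by_cases h : (subword v T).head? = some a
  · rw [if_pos h, if_pos h]
    have : T.card + 1 + 1 - kappa (subword v T) = (T.card + 1 - kappa (subword v T)) + 1 := by
      omega
    rw [this, pow_succ]
    ring
  · rw [if_neg h, if_neg h]
    have : T.card + 1 + 1 - (kappa (subword v T) + 1) = T.card + 1 - kappa (subword v T) := by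
      omega
    rw [this, pow_succ]
    ring

lemma powerset_image_succ (s : Finset ℕ) :
    (s.image (· + 1)).powerset = s.powerset.image (Finset.image (· + 1)) := by
  ext T
  simp only [Finset.mem_powerset, Finset.mem_image]
  constructor
  · intro hT
    refine ⟨s.filter (fun t => t + 1 ∈ T), Finset.filter_subset _ _, ?_⟩
    ext x
    simp only [Finset.mem_image, Finset.mem_filter]
    constructor
    · rintro ⟨t, ⟨_, ht⟩, rfl⟩; exact ht
    · intro hx
      obtain ⟨t, ht, rfl⟩ := Finset.mem_image.mp (hT hx)
      exact ⟨t, ⟨ht, hx⟩, rfl⟩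
  · rintro ⟨A, hA, rfl⟩
    exact Finset.image_subset_image hA

/-- Splitting the sum over subsets of `[m+1]`. -/
lemma sum_powerset_split (m : ℕ) (f : Finset ℕ → Polynomial ℤ) :
    ∑ T ∈ (Finset.Icc 1 (m + 1)).powerset, f T
      = ∑ T ∈ (Finset.Icc 1 m).powerset,
          (f (T.image (· + 1)) + f (insert 1 (T.image (· + 1)))) := by
  have hIcc : Finset.Icc 1 (m + 1) = insert 1 ((Finset.Icc 1 m).image (· + 1)) := by
    ext t
    simp only [Finset.mem_Icc, Finset.mem_insert, Finset.mem_image]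
    constructor
    · intro ⟨h1, h2⟩
      rcases Nat.eq_or_lt_of_le h1 with h | h
      · exact Or.inl h.symm
      · exact Or.inr ⟨t - 1, ⟨by omega, by omega⟩, by omega⟩
    · rintro (rfl | ⟨x, ⟨hx1, hx2⟩, rfl⟩) <;> omega
  have h1 : (1:ℕ) ∉ (Finset.Icc 1 m).image (· + 1) := by
    apply one_not_mem_image
    simp
  have hinj : Function.Injective (Finset.image (fun x : ℕ => x + 1)) :=
    Finset.image_injective (fun a b h => by omega)
  rw [hIcc, Finset.sum_powerset_insert h1, Finset.sum_add_distrib]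
  congr 1
  · rw [powerset_image_succ, Finset.sum_image (fun _ _ _ _ h => hinj h)]
  · rw [powerset_image_succ, Finset.sum_image (fun _ _ _ _ h => hinj h)]

lemma head_eq_none_iff (v : List Bool) (T : Finset ℕ) (hT : T ⊆ Finset.Icc 1 v.length) :
    (subword v T).head? = none ↔ T = ∅ := by
  rw [List.head?_eq_none_iff, ← List.length_eq_zero_iff, subword_length v T hT,
    Finset.card_eq_zero]

/-- Total sum decomposes via heads. -/
lemma total_sum (v : List Bool) :
    ∑ T ∈ (Finset.Icc 1 v.length).powerset, tm v T
      = Ssum false v + Ssum true v + (X + 1) := by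
  rw [Ssum, Ssum, ← Finset.sum_add_distrib]
  have hemp : (X + 1 : Polynomial ℤ)
      = ∑ T ∈ (Finset.Icc 1 v.length).powerset, if T = ∅ then tm v T else 0 := by
    rw [Finset.sum_ite_eq' _ (∅ : Finset ℕ) (tm v)]
    simp [tm_empty]
  rw [hemp, ← Finset.sum_add_distrib]
  apply Finset.sum_congr rfl
  intro T hT
  rw [Finset.mem_powerset] at hT
  rcases h : (subword v T).head? with _ | b
  · rw [(head_eq_none_iff v T hT).mp h]
    simp
  · have hne : ¬ T = ∅ := by
      intro he
      rw [he, subword_empty] at h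
      simp at h
    cases b <;> simp [hne]

lemma KL_eq (v : List Bool) : KL v = (Ssum false v, Ssum true v) := by
  induction v with
  | nil =>
    have : ∀ b, Ssum b [] = 0 := by
      intro b
      rw [Ssum]
      simp [subword_empty]
    rw [KL, this, this]
  | cons a v ih =>
    have key : ∀ b : Bool, Ssum b (a :: v)
        = (if b = a
            then (X + 1) * (Ssum false v + Ssum true v + (X + 1))
            else Ssum b v) := by
      intro b
      have hlen : (a :: v).length = v.length + 1 := rfl
      conv_lhs => rw [Ssum]
      rw [hlen, sum_powerset_split]
      by_cases hba : b = a
      · subst hba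
        rw [if_pos rfl, ← total_sum, Finset.mul_sum]
        apply Finset.sum_congr rfl
        intro T hT
        rw [Finset.mem_powerset] at hT
        have h0 : 0 ∉ T := zero_not_mem T v.length hT
        rw [subword_shift b v T h0, subword_insert b v T h0, tm_shift b v T h0,
          tm_insert b v T hT]
        simp only [List.head?_cons, Option.some_inj]
        by_cases h : (subword v T).head? = some b
        · rw [if_pos h, if_pos h, if_pos trivial]
          ring
        · rw [if_neg h, if_neg h, if_pos trivial]
          ring
      · rw [if_neg hba, Ssum]
        apply Finset.sum_congr rfl
        intro T hT
        rw [Finset.mem_powerset] at hT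
        have h0 : 0 ∉ T := zero_not_mem T v.length hT
        rw [subword_shift a v T h0, subword_insert a v T h0, tm_shift a v T h0]
        have : ¬ ((a :: subword v T).head? = some b) := by
          simp only [List.head?_cons, Option.some_inj]
          exact fun h => hba h.symm
        rw [if_neg this, add_zero]
    cases a
    · rw [KL, ih, key false, key true, if_pos rfl, if_neg (by simp)]
      refine Prod.ext ?_ rfl
      ring
    · rw [KL, ih, key false, key true, if_neg (by simp), if_pos rfl]
      refine Prod.ext rfl ?_
      ring

/-- `F(v) = K(v) + L(v) + t + 2` agrees with the summation formula. -/
theorem stmt5 (v : List Bool) :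
    (KL v).1 + (KL v).2 + Polynomial.X + 2 = fPoly v := by
  rw [KL_eq, fPoly]
  have : ∑ T ∈ (Finset.Icc 1 v.length).powerset,
      (Polynomial.X + 1) ^ kappa (subword v T) *
        Polynomial.X ^ (T.card + 1 - kappa (subword v T))
      = ∑ T ∈ (Finset.Icc 1 v.length).powerset, tm v T := rfl
  rw [this, total_sum]
  ring
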